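/- Lemma (lifting happens-before through transactions): under the hypotheses that hb = (po ∪ rfsc ∪ tsw)⁺ with tsw = weaklift(ecom, stxn), that stxn is a partial equivalence relation with stxn ⊆ po ∪ po⁻¹ ∪ id restricted to threads, that no event in the domain of stxn is SC (so [domain(stxn)];rfsc = rfsc;[domain(stxn)] = ∅), and that stxn;(po\stxn) ⊆ po\stxn, (po\stxn);stxn ⊆ po\stxn, stxn;tsw ⊆ tsw, tsw;stxn ⊆ tsw: then stxn* ; (hb \ stxn) ; stxn* ⊆ hb \ stxn. -/

import Mathlib

def relComp {E : Type*} (r s : E → E → Prop) : E → E → Prop :=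
  fun a c => ∃ b, r a b ∧ s b c

def relDiff {E : Type*} (r t : E → E → Prop) : E → E → Prop :=
  fun a b => r a b ∧ ¬ t a b

def reflCl {E : Type*} (t : E → E → Prop) : E → E → Prop :=
  fun a b => t a b ∨ a = b

def weaklift {E : Type*} (r t : E → E → Prop) : E → E → Prop :=
  relComp t (relComp (relDiff r t) t)

def stronglift {E : Type*} (r t : E → E → Prop) : E → E → Prop :=
  relComp (reflCl t) (relComp (relDiff r t) (reflCl t))

def relUnion {E : Type*} (r s : E → E → Prop) : E → E → Prop :=
  fun a b => r a b ∨ s a b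

def acyclicRel {E : Type*} (r : E → E → Prop) : Prop :=
  Irreflexive (Relation.TransGen r)

theorem lift_hb_through_transactions {E : Type*}
    (po rfsc ecom stxn : E → E → Prop)
    (hstxnSym : ∀ a b, stxn a b → stxn b a)
    (hstxnTrans : ∀ a b c, stxn a b → stxn b c → stxn a c)
    -- stxn is within threads: stxn ⊆ po ∪ po⁻¹ ∪ id
    (hstxnPo : ∀ a b, stxn a b → po a b ∨ po b a ∨ a = b)
    -- no event in the domain of stxn is SC
    (hNoSCdom : ∀ a b, rfsc a b → (¬ ∃ c, stxn a c) ∧ (¬ ∃ c, stxn b c))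
    -- transactions are po-contiguous / tsw relates whole transactions
    (hpo1 : ∀ a b c, stxn a b → (po b c ∧ ¬ stxn b c) → po a c ∧ ¬ stxn a c)
    (hpo2 : ∀ a b c, (po a b ∧ ¬ stxn a b) → stxn b c → po a c ∧ ¬ stxn a c)
    (htsw1 : ∀ a b c, stxn a b → weaklift ecom stxn b c → weaklift ecom stxn a c)
    (htsw2 : ∀ a b c, weaklift ecom stxn a b → stxn b c → weaklift ecom stxn a c) :
    let tsw : E → E → Prop := weaklift ecom stxn
    let hb : E → E → Prop := Relation.TransGen (fun x y => po x y ∨ rfsc x y ∨ tsw x y)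
    ∀ a b, relComp (Relation.ReflTransGen stxn)
        (relComp (relDiff hb stxn) (Relation.ReflTransGen stxn)) a b →
      relDiff hb stxn a b := by
  intro tsw hb
  -- L1: prepend stxn on the left
  have L1 : ∀ b c, hb b c → ∀ a, stxn a b → ¬ stxn b c → hb a c ∧ ¬ stxn a c := by
    intro b c h
    induction h using Relation.TransGen.head_induction_on with
    | single h =>
      rename_i b' -- base: step b' c
      intro a hab hnbc
      have hnac : ¬ stxn a c := fun hac => hnbc (hstxnTrans _ _ _ (hstxnSym _ _ hab) hac)
      rcases h with hpo | hrf | htw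
      · exact ⟨Relation.TransGen.single (Or.inl (hpo1 a b' c hab ⟨hpo, hnbc⟩).1), hnac⟩
      · exact absurd ⟨a, hstxnSym _ _ hab⟩ (hNoSCdom _ _ hrf).1
      · exact ⟨Relation.TransGen.single (Or.inr (Or.inr (htsw1 a b' c hab htw))), hnac⟩
    | head hstep hrest ih =>
      rename_i b' d
      intro a hab hnbc
      have hnac : ¬ stxn a c := fun hac => hnbc (hstxnTrans _ _ _ (hstxnSym _ _ hab) hac)
      rcases hstep with hpo | hrf | htw
      · by_cases hbd : stxn b' d
        · have hnd : ¬ stxn d c := fun hdc => hnbc (hstxnTrans _ _ _ hbd hdc)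
          exact ⟨(ih a (hstxnTrans _ _ _ hab hbd) hnd).1, hnac⟩
        · have := hpo1 a b' d hab ⟨hpo, hbd⟩
          exact ⟨Relation.TransGen.head (Or.inl this.1) hrest, hnac⟩
      · exact absurd ⟨a, hstxnSym _ _ hab⟩ (hNoSCdom _ _ hrf).1
      · exact ⟨Relation.TransGen.head (Or.inr (Or.inr (htsw1 a b' d hab htw))) hrest, hnac⟩
  -- L2: append stxn on the right
  have L2 : ∀ a b, hb a b → ∀ c, stxn b c → ¬ stxn a b → hb a c ∧ ¬ stxn a c := by
    intro a b h
    induction h with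
    | single h =>
      rename_i b'
      intro c hbc hnab
      have hnac : ¬ stxn a c := fun hac => hnab (hstxnTrans _ _ _ hac (hstxnSym _ _ hbc))
      rcases h with hpo | hrf | htw
      · exact ⟨Relation.TransGen.single (Or.inl (hpo2 a b' c ⟨hpo, hnab⟩ hbc).1), hnac⟩
      · exact absurd ⟨c, hbc⟩ (hNoSCdom _ _ hrf).2
      · exact ⟨Relation.TransGen.single (Or.inr (Or.inr (htsw2 a b' c htw hbc))), hnac⟩
    | tail hrest hstep ih =>
      rename_i d b'
      intro c hbc hnab
      have hnac : ¬ stxn a c := fun hac => hnab (hstxnTrans _ _ _ hac (hstxnSym _ _ hbc))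
      rcases hstep with hpo | hrf | htw
      · by_cases hdb : stxn d b'
        · have hnad : ¬ stxn a d := fun had => hnab (hstxnTrans _ _ _ had hdb)
          exact ⟨(ih c (hstxnTrans _ _ _ hdb hbc) hnad).1, hnac⟩
        · have := hpo2 d b' c ⟨hpo, hdb⟩ hbc
          exact ⟨Relation.TransGen.tail hrest (Or.inl this.1), hnac⟩
      · exact absurd ⟨c, hbc⟩ (hNoSCdom _ _ hrf).2
      · exact ⟨Relation.TransGen.tail hrest (Or.inr (Or.inr (htsw2 d b' c htw hbc))), hnac⟩
  rintro a b ⟨x, hax, y, ⟨hxy, hnxy⟩, hyb⟩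
  -- extend right
  have hR : hb x b ∧ ¬ stxn x b := by
    induction hyb with
    | refl => exact ⟨hxy, hnxy⟩
    | tail _ hstep ih => exact L2 _ _ ih.1 _ hstep ih.2
  -- extend left
  clear hxy hnxy
  induction hax using Relation.ReflTransGen.head_induction_on with
  | refl => exact hR
  | head hstep _ ih => exact L1 _ _ ih.1 _ hstep ih.2
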